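/- A finite simple graph G is chordal if and only if every minimal separator of G is a clique. -/

import Mathlib

open SimpleGraph

variable {V : Type*}

/-- `D` is (the vertex set of) a connected component of `G - S`. -/
def IsCompOf (G : SimpleGraph V) (S D : Set V) : Prop :=
  D.Nonempty ∧ Disjoint D S ∧ (G.induce D).Connected ∧
    ∀ v ∈ D, ∀ w : V, G.Adj v w → w ∉ S → w ∈ D

/-- The open neighborhood `N(D)` of a vertex set `D`. -/
def nbhd (G : SimpleGraph V) (D : Set V) : Set V :=
  {v | v ∉ D ∧ ∃ d ∈ D, G.Adj v d}

/-- The closed neighborhood `N[D]` of a vertex set `D`. -/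
def closedNbhd (G : SimpleGraph V) (D : Set V) : Set V :=
  D ∪ nbhd G D

/-- `D` is full to `S`: every vertex of `S` has a neighbor in `D`. -/
def FullTo (G : SimpleGraph V) (S D : Set V) : Prop :=
  ∀ s ∈ S, ∃ d ∈ D, G.Adj s d

/-- `S` is a minimal separator: `G - S` has at least two components full to `S`. -/
def IsMinSep (G : SimpleGraph V) (S : Set V) : Prop :=
  ∃ D₁ D₂ : Set V, IsCompOf G S D₁ ∧ IsCompOf G S D₂ ∧ D₁ ≠ D₂ ∧
    FullTo G S D₁ ∧ FullTo G S D₂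

/-- A graph is chordal if it has no induced cycle of length at least 4. -/
def IsChordal (G : SimpleGraph V) : Prop :=
  ∀ n : ℕ, 4 ≤ n → IsEmpty (cycleGraph n ↪g G)

/-- restriction of G to vertices outside S -/
def Gres (G : SimpleGraph V) (S : Set V) : SimpleGraph V where
  Adj x y := G.Adj x y ∧ x ∉ S ∧ y ∉ S
  symm := ⟨by rintro x y ⟨h, hx, hy⟩; exact ⟨h.symm, hy, hx⟩⟩
  loopless := ⟨by rintro x ⟨h, _, _⟩; exact G.loopless.irrefl x h⟩

def comp (G : SimpleGraph V) (S : Set V) (v : V) : Set V := {w | (Gres G S).Reachable v w}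

lemma mem_comp_self (G : SimpleGraph V) (S : Set V) (v : V) : v ∈ comp G S v := Reachable.refl v

lemma gres_walk_support {G : SimpleGraph V} {S : Set V} {a b : V} (W : (Gres G S).Walk a b)
    (ha : a ∉ S) : ∀ u ∈ W.support, u ∉ S := by
  induction W with
  | nil => intro u hu; rw [SimpleGraph.Walk.support_nil, List.mem_singleton] at hu; subst hu; exact ha
  | cons h W ih =>
    intro u hu
    rw [SimpleGraph.Walk.support_cons, List.mem_cons] at hu
    rcases hu with rfl | hu
    · exact ha
    · exact ih h.2.2 u hu

lemma comp_not_mem {G : SimpleGraph V} {S : Set V} {v w : V} (hv : v ∉ S) (hw : w ∈ comp G S v) :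
    w ∉ S := by
  obtain ⟨W⟩ := hw
  exact gres_walk_support W hv w W.end_mem_support

lemma comp_closed {G : SimpleGraph V} {S : Set V} {v w u : V} (hv : v ∉ S) (hw : w ∈ comp G S v)
    (hadj : G.Adj w u) (hu : u ∉ S) : u ∈ comp G S v :=
  Reachable.trans hw (SimpleGraph.Adj.reachable ⟨hadj, comp_not_mem hv hw, hu⟩)

lemma walk_induce_reachable {G : SimpleGraph V} {S : Set V} {D : Set V} {a b : V}
    (W : (Gres G S).Walk a b) (hW : ∀ u ∈ W.support, u ∈ D) :
    (G.induce D).Reachable ⟨a, hW a W.start_mem_support⟩ ⟨b, hW b W.end_mem_support⟩ := by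
  induction W with
  | nil => rfl
  | @cons a c b h W ih =>
    have hc : c ∈ D := hW c (by simp)
    have := ih (fun u hu => hW u (by simp [hu]))
    exact Reachable.trans (SimpleGraph.Adj.reachable (by simpa [comap_adj] using h.1)) this

lemma comp_isCompOf {G : SimpleGraph V} {S : Set V} {v : V} (hv : v ∉ S) :
    IsCompOf G S (comp G S v) := by
  refine ⟨⟨v, mem_comp_self G S v⟩, ?_, ?_, ?_⟩
  · rw [Set.disjoint_left]; exact fun w hw => comp_not_mem hv hw
  · have : Nonempty (comp G S v) := ⟨⟨v, mem_comp_self G S v⟩⟩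
    refine ⟨?_⟩
    · rintro ⟨a, ha⟩ ⟨b, hb⟩
      obtain ⟨Wa⟩ := ha
      obtain ⟨Wb⟩ := hb
      classical
      have hWa : ∀ u ∈ Wa.support, u ∈ comp G S v := fun u hu => ⟨Wa.takeUntil u hu⟩
      have hWb : ∀ u ∈ Wb.support, u ∈ comp G S v := fun u hu => ⟨Wb.takeUntil u hu⟩
      exact Reachable.trans (walk_induce_reachable Wa hWa).symm (walk_induce_reachable Wb hWb)
  · exact fun w hw u hadj hu => comp_closed hv hw hadj hu

lemma induce_walk_push {G : SimpleGraph V} {S D D' : Set V} (hDS : Disjoint D S)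
    (hcl : ∀ v ∈ D', ∀ w : V, G.Adj v w → w ∉ S → w ∈ D') {a b : ↥D}
    (W : (G.induce D).Walk a b) (ha : a.val ∈ D') : b.val ∈ D' := by
  induction W with
  | nil => exact ha
  | @cons a c b h W ih =>
    have hadj : G.Adj a.val c.val := by simpa [comap_adj] using h
    have hcS : c.val ∉ S := Set.disjoint_left.mp hDS c.2
    exact ih (hcl a.val ha c.val hadj hcS)

lemma isCompOf_subset {G : SimpleGraph V} {S D D' : Set V} (hD : IsCompOf G S D)
    (hD' : IsCompOf G S D') {v : V} (hv : v ∈ D) (hv' : v ∈ D') : D ⊆ D' := by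
  intro w hw
  obtain ⟨W⟩ := hD.2.2.1.preconnected ⟨v, hv⟩ ⟨w, hw⟩
  exact induce_walk_push hD.2.1 hD'.2.2.2 W hv'

lemma isCompOf_eq_of_mem {G : SimpleGraph V} {S D D' : Set V} (hD : IsCompOf G S D)
    (hD' : IsCompOf G S D') {v : V} (hv : v ∈ D) (hv' : v ∈ D') : D = D' :=
  le_antisymm (isCompOf_subset hD hD' hv hv') (isCompOf_subset hD' hD hv' hv)

lemma isCompOf_disjoint {G : SimpleGraph V} {S D D' : Set V} (hD : IsCompOf G S D)
    (hD' : IsCompOf G S D') (hne : D ≠ D') : Disjoint D D' := by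
  rw [Set.disjoint_left]
  intro v hv hv'
  exact hne (isCompOf_eq_of_mem hD hD' hv hv')

lemma isCompOf_nbhd {G : SimpleGraph V} {D : Set V} (hne : D.Nonempty)
    (hconn : (G.induce D).Connected) : IsCompOf G (nbhd G D) D := by
  refine ⟨hne, ?_, hconn, ?_⟩
  · rw [Set.disjoint_left]; intro w hw hw'; exact hw'.1 hw
  · intro v hv w hadj hw
    by_contra hwD
    exact hw ⟨hwD, v, hv, hadj.symm⟩

lemma exists_walk_take {G : SimpleGraph V} {u v : V} (p : G.Walk u v) (i : ℕ)
    (hi : i ≤ p.length) : ∃ q : G.Walk u (p.getVert i), q.length = i := by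
  induction p generalizing i with
  | nil =>
    simp only [SimpleGraph.Walk.length_nil, Nat.le_zero] at hi
    subst hi
    exact ⟨SimpleGraph.Walk.nil.copy rfl (by simp), by simp⟩
  | @cons a c b h p ih =>
    match i with
    | 0 => exact ⟨SimpleGraph.Walk.nil.copy rfl (by simp), by simp⟩
    | (i+1) =>
      obtain ⟨q, hq⟩ := ih i (by simpa using hi)
      exact ⟨(q.cons h).copy rfl (by simp [SimpleGraph.Walk.getVert_cons_succ]), by simp [hq]⟩

lemma exists_walk_drop {G : SimpleGraph V} {u v : V} (p : G.Walk u v) (i : ℕ)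
    (hi : i ≤ p.length) : ∃ q : G.Walk (p.getVert i) v, q.length = p.length - i := by
  induction p generalizing i with
  | nil =>
    simp only [SimpleGraph.Walk.length_nil, Nat.le_zero] at hi
    subst hi
    exact ⟨SimpleGraph.Walk.nil.copy (by simp) rfl, by simp⟩
  | @cons a c b h p ih =>
    match i with
    | 0 => exact ⟨(p.cons h).copy (by simp) rfl, by simp⟩
    | (i+1) =>
      obtain ⟨q, hq⟩ := ih i (by simpa using hi)
      exact ⟨q.copy (by simp [SimpleGraph.Walk.getVert_cons_succ]) rfl, by simp [hq]⟩

lemma path_getVert_inj {G : SimpleGraph V} {u v : V} {p : G.Walk u v} (hp : p.IsPath)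
    {i j : ℕ} (hi : i ≤ p.length) (hj : j ≤ p.length) (h : p.getVert i = p.getVert j) :
    i = j := by
  induction p generalizing i j with
  | nil =>
    simp only [SimpleGraph.Walk.length_nil, Nat.le_zero] at hi hj
    omega
  | @cons a c b hadj p ih =>
    rw [SimpleGraph.Walk.cons_isPath_iff] at hp
    match i, j with
    | 0, 0 => rfl
    | 0, (j+1) =>
      exfalso
      apply hp.2
      rw [SimpleGraph.Walk.mem_support_iff_exists_getVert]
      refine ⟨j, ?_, by simpa using hj⟩
      rw [← SimpleGraph.Walk.getVert_cons_succ p hadj, ← h, SimpleGraph.Walk.getVert_zero]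
    | (i+1), 0 =>
      exfalso
      apply hp.2
      rw [SimpleGraph.Walk.mem_support_iff_exists_getVert]
      refine ⟨i, ?_, by simpa using hi⟩
      rw [← SimpleGraph.Walk.getVert_cons_succ p hadj, h, SimpleGraph.Walk.getVert_zero]
    | (i+1), (j+1) =>
      have := ih hp.1 (by simpa using hi) (by simpa using hj)
        (by simpa [SimpleGraph.Walk.getVert_cons_succ] using h)
      omega

lemma no_chord {H : SimpleGraph V} {x y : V} {p : H.Walk x y} (hp : p.length = H.dist x y)
    {i j : ℕ} (hij : i + 1 < j) (hj : j ≤ p.length) :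
    ¬ H.Adj (p.getVert i) (p.getVert j) := by
  intro hadj
  obtain ⟨q1, hq1⟩ := exists_walk_take p i (by omega)
  obtain ⟨q2, hq2⟩ := exists_walk_drop p j hj
  have hd : H.dist x y ≤ (q1.append (q2.cons hadj)).length := SimpleGraph.dist_le _
  rw [SimpleGraph.Walk.length_append, SimpleGraph.Walk.length_cons, hq1, hq2] at hd
  omega

/-- consecutive indices on a cycle of length n -/
def ConsecMod (n k l : ℕ) : Prop :=
  l = k + 1 ∨ k = l + 1 ∨ (k = 0 ∧ l = n - 1) ∨ (l = 0 ∧ k = n - 1)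

lemma mod_eq_one_iff {n c : ℕ} (hn : 1 < n) (hc : c < 2 * n) :
    c % n = 1 ↔ c = 1 ∨ c = n + 1 := by
  rcases Nat.lt_or_ge c n with h | h
  · rw [Nat.mod_eq_of_lt h]; omega
  · rw [Nat.mod_eq_sub_mod h, Nat.mod_eq_of_lt (by omega)]; omega

lemma cycleGraph_adj_iff {n : ℕ} (hn : 2 ≤ n) (i j : Fin n) :
    (cycleGraph n).Adj i j ↔ ConsecMod n i.val j.val := by
  rw [SimpleGraph.cycleGraph_adj']
  have hi := i.2
  have hj := j.2
  have key : ∀ a b : Fin n, ((a - b).val = 1 ↔ (a.val = b.val + 1 ∨ (a.val = 0 ∧ b.val = n - 1))) := by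
    intro a b
    rw [Fin.sub_def]
    simp only [Fin.val_mk]
    rw [mod_eq_one_iff (by omega) (by omega)]
    have := a.2; have := b.2
    omega
  rw [key, key]
  unfold ConsecMod
  omega

lemma not_mem_comp_of_no_edge {G : SimpleGraph V} {S : Set V} {a b : V} (hne : a ≠ b)
    (h : ∀ u, ¬ (Gres G S).Adj a u) : a ∉ comp G S b := by
  intro hmem
  obtain ⟨W⟩ := Reachable.symm (hmem : (Gres G S).Reachable b a)
  cases W with
  | nil => exact hne rfl
  | cons h' W => exact h _ h'

lemma clique_imp_chordal (G : SimpleGraph V)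
    (hS : ∀ S : Set V, IsMinSep G S → G.IsClique S) : IsChordal G := by
  intro n hn
  constructor
  intro f
  set a : V := f ⟨0, by omega⟩ with ha_def
  set b : V := f ⟨2, by omega⟩ with hb_def
  have hab_ne : a ≠ b := by
    intro h
    have := f.injective h
    simp [Fin.ext_iff] at this
  have hab : ¬ G.Adj a b := by
    rw [ha_def, hb_def, SimpleGraph.Embedding.map_adj_iff, cycleGraph_adj_iff (by omega)]
    unfold ConsecMod
    simp only [Fin.val_mk]
    omega
  set S₀ : Set V := ({a, b} : Set V)ᶜ with hS₀
  have hbot : Gres G S₀ = ⊥ := by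
    ext u v
    simp only [SimpleGraph.bot_adj, iff_false]
    rintro ⟨hadj, hu, hv⟩
    simp only [hS₀, Set.mem_compl_iff, not_not, Set.mem_insert_iff, Set.mem_singleton_iff] at hu hv
    rcases hu with rfl | rfl <;> rcases hv with rfl | rfl
    · exact G.loopless.irrefl _ hadj
    · exact hab hadj
    · exact hab hadj.symm
    · exact G.loopless.irrefl _ hadj
  have hD1 : ∀ w, w ∈ comp G S₀ a → w = a := by
    intro w hw
    have : (Gres G S₀).Reachable a w := hw
    rw [hbot, reachable_bot] at this
    exact this.symm
  set S₁ : Set V := nbhd G (comp G S₀ a) with hS₁def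
  have hS₁ : ∀ v, v ∈ S₁ ↔ G.Adj v a := by
    intro v
    constructor
    · rintro ⟨hvD, d, hd, hadj⟩
      rwa [hD1 d hd] at hadj
    · intro hadj
      refine ⟨?_, a, mem_comp_self G S₀ a, hadj⟩
      intro hv
      rw [hD1 v hv] at hadj
      exact G.loopless.irrefl a hadj
  have hbS₁ : b ∉ S₁ := by
    rw [hS₁]
    exact fun h => hab h.symm
  set D₂ : Set V := comp G S₁ b with hD₂def
  have hbD2 : b ∈ D₂ := mem_comp_self G S₁ b
  have haD2 : a ∉ D₂ := by
    refine not_mem_comp_of_no_edge hab_ne ?_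
    rintro u ⟨hadj, _, huS⟩
    exact huS ((hS₁ _).mpr hadj.symm)
  set S₂ : Set V := nbhd G D₂ with hS₂def
  have hS₂S₁ : S₂ ⊆ S₁ := by
    rintro s ⟨hsD, d, hd, hadj⟩
    by_contra hs
    exact hsD (comp_closed hbS₁ hd hadj.symm hs)
  have haS₂ : a ∉ S₂ := by
    rintro ⟨_, d, hd, hadj⟩
    exact comp_not_mem hbS₁ hd ((hS₁ d).mpr hadj.symm)
  have hbS₂ : b ∉ S₂ := fun h => h.1 hbD2
  set D₃ : Set V := comp G S₂ a with hD₃def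
  have haD3 : a ∈ D₃ := mem_comp_self G S₂ a
  have hD2comp : IsCompOf G S₂ D₂ := isCompOf_nbhd ⟨b, hbD2⟩ (comp_isCompOf hbS₁).2.2.1
  have hD3comp : IsCompOf G S₂ D₃ := comp_isCompOf haS₂
  have hne : D₃ ≠ D₂ := fun h => haD2 (h ▸ haD3)
  have hclique : G.IsClique S₂ := by
    refine hS S₂ ⟨D₃, D₂, hD3comp, hD2comp, hne, ?_, ?_⟩
    · exact fun s hs => ⟨a, haD3, (hS₁ s).mp (hS₂S₁ hs)⟩
    · exact fun s hs => hs.2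
  have hbD3 : b ∉ D₃ :=
    fun h => Set.disjoint_left.mp (isCompOf_disjoint hD3comp hD2comp hne) h hbD2
  have hadjk : ∀ (k l : ℕ) (hk : k < n) (hl : l < n), ConsecMod n k l →
      G.Adj (f ⟨k, hk⟩) (f ⟨l, hl⟩) := by
    intro k l hk hl hc
    rw [SimpleGraph.Embedding.map_adj_iff, cycleGraph_adj_iff (by omega)]
    exact hc
  have h1S₂ : f ⟨1, by omega⟩ ∈ S₂ := by
    by_contra h1
    have h1D3 : f ⟨1, by omega⟩ ∈ D₃ :=
      hD3comp.2.2.2 a haD3 _ (hadjk 0 1 (by omega) (by omega) (by unfold ConsecMod; omega)) h1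
    have h2D3 : b ∈ D₃ :=
      hD3comp.2.2.2 _ h1D3 b (hadjk 1 2 (by omega) (by omega) (by unfold ConsecMod; omega)) hbS₂
    exact hbD3 h2D3
  by_cases hex : ∃ j, ∃ _ : 3 ≤ j, ∃ _ : j ≤ n - 1, f ⟨j, by omega⟩ ∈ S₂
  · obtain ⟨j, hj3, hjn, hjS⟩ := hex
    have hne2 : f ⟨1, by omega⟩ ≠ f ⟨j, by omega⟩ := by
      intro h
      have := f.injective h
      simp only [Fin.mk.injEq] at this
      omega
    have hadj := hclique h1S₂ hjS hne2
    rw [SimpleGraph.Embedding.map_adj_iff, cycleGraph_adj_iff (by omega)] at hadj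
    unfold ConsecMod at hadj
    simp only [Fin.val_mk] at hadj
    omega
  · push_neg at hex
    have claim : ∀ m : ℕ, ∀ h3 : 3 ≤ n - 1 - m, f ⟨n - 1 - m, by omega⟩ ∈ D₃ := by
      intro m
      induction m with
      | zero =>
        intro h3
        refine hD3comp.2.2.2 a haD3 _
          (hadjk 0 (n - 1 - 0) (by omega) (by omega) (by unfold ConsecMod; omega)) ?_
        exact hex _ (by omega) (by omega)
      | succ m ih =>
        intro h3
        have hkey : (⟨n - 1 - m, by omega⟩ : Fin n) = ⟨(n - 1 - (m + 1)) + 1, by omega⟩ :=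
          Fin.ext (by simp; omega)
        have hprev : f ⟨(n - 1 - (m + 1)) + 1, by omega⟩ ∈ D₃ := by
          rw [← hkey]; exact ih (by omega)
        refine hD3comp.2.2.2 _ hprev _
          (hadjk ((n - 1 - (m + 1)) + 1) (n - 1 - (m + 1)) (by omega) (by omega)
            (by unfold ConsecMod; omega)) ?_
        exact hex _ (by omega) (by omega)
    have h3D3 : f ⟨3, by omega⟩ ∈ D₃ := by
      have hkey : (⟨n - 1 - (n - 4), by omega⟩ : Fin n) = ⟨3, by omega⟩ := Fin.ext (by simp; omega)
      rw [← hkey]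
      exact claim (n - 4) (by omega)
    have : b ∈ D₃ :=
      hD3comp.2.2.2 _ h3D3 b (hadjk 3 2 (by omega) (by omega) (by unfold ConsecMod; omega)) hbS₂
    exact hbD3 this

/-- restriction of G to vertices inside A -/
def GresTo (G : SimpleGraph V) (A : Set V) : SimpleGraph V where
  Adj x y := G.Adj x y ∧ x ∈ A ∧ y ∈ A
  symm := ⟨by rintro x y ⟨h, hx, hy⟩; exact ⟨h.symm, hy, hx⟩⟩
  loopless := ⟨by rintro x ⟨h, _, _⟩; exact G.loopless.irrefl x h⟩

lemma induce_reachable_to {G : SimpleGraph V} {D A : Set V} (hDA : D ⊆ A) {a b : ↥D}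
    (h : (G.induce D).Reachable a b) : (GresTo G A).Reachable a.val b.val := by
  obtain ⟨W⟩ := h
  induction W with
  | nil => rfl
  | @cons a c b h W ih =>
    exact Reachable.trans
      (SimpleGraph.Adj.reachable ⟨by simpa [comap_adj] using h, hDA a.2, hDA c.2⟩) ih

lemma side_path {G : SimpleGraph V} {S D : Set V} {x y : V} (hD : IsCompOf G S D)
    (hfull : FullTo G S D) (hx : x ∈ S) (hy : y ∈ S) (hxy : x ≠ y) (hnadj : ¬ G.Adj x y) :
    ∃ p : (GresTo G (D ∪ {x, y})).Walk x y, p.IsPath ∧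
      p.length = (GresTo G (D ∪ {x, y})).dist x y ∧ 2 ≤ p.length ∧
      (∀ i, 0 < i → i < p.length → p.getVert i ∈ D) := by
  set A : Set V := D ∪ {x, y} with hA
  have hxA : x ∈ A := Or.inr (Or.inl rfl)
  have hyA : y ∈ A := Or.inr (Or.inr rfl)
  have hDA : D ⊆ A := Set.subset_union_left
  obtain ⟨d, hd, hadjxd⟩ := hfull x hx
  obtain ⟨d', hd', hadjyd'⟩ := hfull y hy
  have hreach : (GresTo G A).Reachable x y := by
    refine Reachable.trans (SimpleGraph.Adj.reachable ⟨hadjxd, hxA, hDA hd⟩) ?_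
    refine Reachable.trans (induce_reachable_to hDA
      (hD.2.2.1.preconnected ⟨d, hd⟩ ⟨d', hd'⟩)) ?_
    exact SimpleGraph.Adj.reachable ⟨hadjyd'.symm, hDA hd', hyA⟩
  obtain ⟨p, hpath, hlen⟩ := hreach.exists_path_of_dist
  have hP0 : p.length ≠ 0 := fun h => hxy (SimpleGraph.Walk.eq_of_length_eq_zero h)
  have hP1 : p.length ≠ 1 := by
    intro h
    have := p.adj_getVert_succ (i := 0) (by omega)
    rw [SimpleGraph.Walk.getVert_zero] at this
    have h1 : p.getVert (0 + 1) = y := by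
      rw [show (0 + 1 : ℕ) = p.length by omega, SimpleGraph.Walk.getVert_length]
    rw [h1] at this
    exact hnadj this.1
  refine ⟨p, hpath, hlen, by omega, ?_⟩
  intro i hi0 hiP
  have hedge := p.adj_getVert_succ (i := i - 1) (by omega)
  have hieq : i - 1 + 1 = i := by omega
  rw [hieq] at hedge
  have hiA : p.getVert i ∈ A := hedge.2.2
  rcases hiA with hiD | hixy
  · exact hiD
  · exfalso
    rcases hixy with hix | hiy
    · have : i = 0 := path_getVert_inj hpath (by omega) (by omega)
        (by rw [SimpleGraph.Walk.getVert_zero]; exact hix)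
      omega
    · have : i = p.length := path_getVert_inj hpath (by omega) le_rfl
        (by rw [SimpleGraph.Walk.getVert_length]; exact hiy)
      omega

lemma consecMod_symm {n k l : ℕ} (h : ConsecMod n k l) : ConsecMod n l k := by
  unfold ConsecMod at *; omega

lemma chordal_imp_clique (G : SimpleGraph V) (hG : IsChordal G) (S : Set V)
    (hmin : IsMinSep G S) : G.IsClique S := by
  obtain ⟨D₁, D₂, hD₁, hD₂, hDne, hfull₁, hfull₂⟩ := hmin
  rw [SimpleGraph.isClique_iff]
  intro x hx y hy hxy
  by_contra hnadj
  have hdisj : Disjoint D₁ D₂ := isCompOf_disjoint hD₁ hD₂ hDne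
  obtain ⟨p, hppath, hpdist, hP2, hpint⟩ := side_path hD₁ hfull₁ hx hy hxy hnadj
  obtain ⟨q, hqpath, hqdist, hQ2, hqint⟩ := side_path hD₂ hfull₂ hx hy hxy hnadj
  have hn : 4 ≤ (p.length + q.length) := by omega
  have hpA : ∀ k, k ≤ p.length → p.getVert k ∈ (D₁ ∪ {x, y}) := by
    intro k hk
    by_cases h0 : k = 0
    · subst h0; rw [SimpleGraph.Walk.getVert_zero]; exact Or.inr (Or.inl rfl)
    by_cases hkP : k = p.length
    · subst hkP
      have : p.getVert p.length = y := p.getVert_length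
      rw [this]; exact Or.inr (Or.inr rfl)
    · exact Or.inl (hpint k (by omega) (by omega))
  set f : Fin (p.length + q.length) → V :=
    fun i => if i.val ≤ p.length then p.getVert i.val else q.getVert (p.length + q.length - i.val)
    with hfdef
  have hfp : ∀ i : Fin (p.length + q.length), i.val ≤ p.length → f i = p.getVert i.val := by
    intro i hi; simp only [hfdef, if_pos hi]
  have hfq : ∀ i : Fin (p.length + q.length), p.length < i.val → f i = q.getVert ((p.length + q.length) - i.val) := by
    intro i hi
    have hneg : ¬ ((i : ℕ) ≤ p.length) := by omega
    simp only [hfdef]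
    rw [if_neg hneg]
  have hmix : ∀ (k l : ℕ), k ≤ p.length → p.length < l → l < (p.length + q.length) → p.getVert k ≠ q.getVert ((p.length + q.length) - l) := by
    intro k l hk hl hln heq
    have hqmem : q.getVert ((p.length + q.length) - l) ∈ D₂ := hqint _ (by omega) (by omega)
    by_cases h0 : k = 0
    · subst h0; rw [SimpleGraph.Walk.getVert_zero] at heq
      exact Set.disjoint_left.mp hD₂.2.1 (heq ▸ hqmem) hx
    by_cases hkP : k = p.length
    · subst hkP
      have : p.getVert p.length = y := p.getVert_length
      rw [this] at heq
      exact Set.disjoint_left.mp hD₂.2.1 (heq ▸ hqmem) hy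
    · have hpmem : p.getVert k ∈ D₁ := hpint k (by omega) (by omega)
      exact Set.disjoint_left.mp hdisj hpmem (heq ▸ hqmem)
  have hinj : Function.Injective f := by
    intro i j h
    have hi2 := i.2; have hj2 := j.2
    by_cases hi : i.val ≤ p.length <;> by_cases hj : j.val ≤ p.length
    · rw [hfp i hi, hfp j hj] at h
      exact Fin.ext (path_getVert_inj hppath hi hj h)
    · exact absurd h (by rw [hfp i hi, hfq j (by omega)]; exact hmix i.val j.val hi (by omega) hj2)
    · exact absurd h.symm
        (by rw [hfp j hj, hfq i (by omega)]; exact hmix j.val i.val hj (by omega) hi2)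
    · rw [hfq i (by omega), hfq j (by omega)] at h
      have := path_getVert_inj hqpath (show (p.length + q.length) - i.val ≤ q.length by omega)
        (show (p.length + q.length) - j.val ≤ q.length by omega) h
      exact Fin.ext (by omega)
  have hfp' : ∀ (k : ℕ) (hk : k < p.length + q.length), k ≤ p.length →
      f ⟨k, hk⟩ = p.getVert k := fun k hk h => hfp ⟨k, hk⟩ h
  have hfq' : ∀ (k : ℕ) (hk : k < p.length + q.length), p.length < k →
      f ⟨k, hk⟩ = q.getVert (p.length + q.length - k) := fun k hk h => hfq ⟨k, hk⟩ h
  have hstep1 : ∀ k : ℕ, ∀ hk1 : k + 1 < (p.length + q.length), G.Adj (f ⟨k, by omega⟩) (f ⟨k + 1, hk1⟩) := by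
    intro k hk1
    by_cases h1 : k + 1 ≤ p.length
    · rw [hfp' k (by omega) (by omega), hfp' (k + 1) hk1 h1]
      exact (p.adj_getVert_succ (by omega)).1
    by_cases h2 : k ≤ p.length
    · have hkP : k = p.length := by omega
      rw [hfp' k (by omega) h2, hfq' (k + 1) hk1 (by omega)]
      have e1 : p.getVert k = y := by rw [hkP]; exact p.getVert_length
      have e2 : (p.length + q.length) - (k + 1) = q.length - 1 := by omega
      rw [e1, e2]
      have h3 := q.adj_getVert_succ (i := q.length - 1) (by omega)
      rw [show q.length - 1 + 1 = q.length by omega] at h3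
      have e3 : q.getVert q.length = y := q.getVert_length
      rw [e3] at h3
      exact h3.1.symm
    · rw [hfq' k (by omega) (by omega), hfq' (k + 1) hk1 (by omega)]
      have h3 := q.adj_getVert_succ (i := (p.length + q.length) - (k + 1)) (by omega)
      rw [show (p.length + q.length) - (k + 1) + 1 = (p.length + q.length) - k by omega] at h3
      exact h3.1.symm
  have hwrap : G.Adj (f ⟨(p.length + q.length) - 1, by omega⟩) (f ⟨0, by omega⟩) := by
    rw [hfq' (p.length + q.length - 1) (by omega) (by omega), hfp' 0 (by omega) (by omega)]
    rw [show (p.length + q.length) - ((p.length + q.length) - 1) = 1 by omega, SimpleGraph.Walk.getVert_zero]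
    have h3 := q.adj_getVert_succ (i := 0) (by omega)
    rw [SimpleGraph.Walk.getVert_zero] at h3
    exact h3.1.symm
  have hstep : ∀ (k l : ℕ) (hk : k < (p.length + q.length)) (hl : l < (p.length + q.length)), ConsecMod (p.length + q.length) k l →
      G.Adj (f ⟨k, hk⟩) (f ⟨l, hl⟩) := by
    intro k l hk hl hc
    rcases hc with h | h | ⟨h1, h2⟩ | ⟨h1, h2⟩
    · subst h; exact hstep1 k hl
    · subst h; exact (hstep1 l hk).symm
    · subst h1; subst h2; exact hwrap.symm
    · subst h1; subst h2; exact hwrap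
  have hmixcase : ∀ i j : Fin (p.length + q.length), i.val ≤ p.length → p.length < j.val → ¬ ConsecMod (p.length + q.length) i.val j.val →
      ¬ G.Adj (f i) (f j) := by
    intro i j hi hj hnc hadj
    have hi2 := i.2; have hj2 := j.2
    rw [hfp i hi, hfq j hj] at hadj
    have hqmem : q.getVert ((p.length + q.length) - j.val) ∈ D₂ := hqint _ (by omega) (by omega)
    by_cases h0 : i.val = 0
    · rw [h0, SimpleGraph.Walk.getVert_zero] at hadj
      have hH : (GresTo G (D₂ ∪ {x, y})).Adj (q.getVert 0) (q.getVert ((p.length + q.length) - j.val)) := by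
        rw [SimpleGraph.Walk.getVert_zero]
        exact ⟨hadj, Or.inr (Or.inl rfl), Or.inl hqmem⟩
      exact no_chord hqdist (show 0 + 1 < (p.length + q.length) - j.val by unfold ConsecMod at hnc; omega)
        (by omega) hH
    by_cases hPi : i.val = p.length
    · rw [hPi] at hadj
      have ey : p.getVert p.length = y := p.getVert_length
      rw [ey] at hadj
      have hH : (GresTo G (D₂ ∪ {x, y})).Adj (q.getVert ((p.length + q.length) - j.val)) (q.getVert q.length) := by
        have ey2 : q.getVert q.length = y := q.getVert_length
        rw [ey2]
        exact ⟨hadj.symm, Or.inl hqmem, Or.inr (Or.inr rfl)⟩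
      exact no_chord hqdist (show (p.length + q.length) - j.val + 1 < q.length by unfold ConsecMod at hnc; omega) le_rfl hH
    · have hpmem : p.getVert i.val ∈ D₁ := hpint _ (by omega) (by omega)
      have hjS : q.getVert ((p.length + q.length) - j.val) ∉ S := Set.disjoint_left.mp hD₂.2.1 hqmem
      have : q.getVert ((p.length + q.length) - j.val) ∈ D₁ := hD₁.2.2.2 _ hpmem _ hadj hjS
      exact Set.disjoint_left.mp hdisj this hqmem
  have hchord : ∀ i j : Fin (p.length + q.length), G.Adj (f i) (f j) → ConsecMod (p.length + q.length) i.val j.val := by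
    intro i j hadj
    by_contra hnc
    have hi2 := i.2; have hj2 := j.2
    by_cases hi : i.val ≤ p.length <;> by_cases hj : j.val ≤ p.length
    · rw [hfp i hi, hfp j hj] at hadj
      have hH : (GresTo G (D₁ ∪ {x, y})).Adj (p.getVert i.val) (p.getVert j.val) :=
        ⟨hadj, hpA _ hi, hpA _ hj⟩
      have hij : i.val ≠ j.val := fun h => by rw [h] at hadj; exact G.loopless.irrefl _ hadj
      rcases Nat.lt_or_ge i.val j.val with hlt | hge
      · exact no_chord hpdist (show i.val + 1 < j.val by unfold ConsecMod at hnc; omega) hj hH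
      · exact no_chord hpdist (show j.val + 1 < i.val by unfold ConsecMod at hnc; omega) hi
          hH.symm
    · exact hmixcase i j hi (by omega) hnc hadj
    · exact hmixcase j i hj (by omega) (fun hc => hnc (consecMod_symm hc)) hadj.symm
    · rw [hfq i (by omega), hfq j (by omega)] at hadj
      have hH : (GresTo G (D₂ ∪ {x, y})).Adj (q.getVert ((p.length + q.length) - i.val)) (q.getVert ((p.length + q.length) - j.val)) :=
        ⟨hadj, Or.inl (hqint _ (by omega) (by omega)), Or.inl (hqint _ (by omega) (by omega))⟩
      have hij : i.val ≠ j.val := fun h => by rw [h] at hadj; exact G.loopless.irrefl _ hadj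
      rcases Nat.lt_or_ge i.val j.val with hlt | hge
      · exact no_chord hqdist
          (show ((p.length + q.length) - j.val) + 1 < (p.length + q.length) - i.val by unfold ConsecMod at hnc; omega) (by omega) hH.symm
      · exact no_chord hqdist
          (show ((p.length + q.length) - i.val) + 1 < (p.length + q.length) - j.val by unfold ConsecMod at hnc; omega) (by omega) hH
  refine (hG (p.length + q.length) hn).false ⟨⟨f, hinj⟩, ?_⟩
  intro i j
  constructor
  · intro h
    rw [cycleGraph_adj_iff (by omega)]
    exact hchord i j h
  · intro h
    rw [cycleGraph_adj_iff (by omega)] at h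
    have := hstep i.val j.val i.2 j.2 h
    simpa using this

/-- A finite graph is chordal iff every minimal separator is a clique. -/
theorem statement_2 [Fintype V] (G : SimpleGraph V) :
    IsChordal G ↔ ∀ S : Set V, IsMinSep G S → G.IsClique S := by
  exact ⟨fun h S hS => chordal_imp_clique G h S hS, clique_imp_chordal G⟩
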